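/- Let F : ℝⁿ → ℝᵐ satisfy the local tangential cone condition with constant η ∈ [0, 1/2), and suppose x⋆ ∈ ℝⁿ satisfies F(x⋆) = 0. Let I ⊆ {1,…,m} be a nonempty index subset, let x_k ∈ ℝⁿ with F'_I(x_k) ≠ 0, let α ∈ (0, 2(1−η)), and define x_{k+1} = x_k − α (F'_I(x_k))ᵀ F_I(x_k) / ‖F'_I(x_k)‖₂². Then ‖x_{k+1} − x⋆‖₂² ≤ ‖x_k − x⋆‖₂² − (2(1−η)α − α²) ‖F_I(x_k)‖₂² / ‖F'_I(x_k)‖₂². -/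

import Mathlib

open Matrix

/-- The singular values of a real matrix `A`: square roots of the eigenvalues of `AᵀA`. -/
noncomputable def singVals {m' : Type*} [Fintype m'] {n : ℕ}
    (A : Matrix m' (Fin n) ℝ) : Fin n → ℝ :=
  fun j => Real.sqrt ((show (Aᵀ * A).IsHermitian from Matrix.isHermitian_conjTranspose_mul_self A).eigenvalues j)

/-- The largest singular value of `A`, i.e. its spectral norm `‖A‖₂`. -/
noncomputable def sigmaMax {m' : Type*} [Fintype m'] {n : ℕ}
    (A : Matrix m' (Fin n) ℝ) : ℝ :=
  ⨆ j, singVals A j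

open Finset RealInnerProductSpace


lemma rayleigh_bound {n : ℕ} (A : Matrix (Fin n) (Fin n) ℝ) (hA : A.IsHermitian)
    (c : ℝ) (hc : ∀ j, hA.eigenvalues j ≤ c) (w : Fin n → ℝ) :
    w ⬝ᵥ (A *ᵥ w) ≤ c * (w ⬝ᵥ w) := by
  classical
  set U : Matrix (Fin n) (Fin n) ℝ := (hA.eigenvectorUnitary : Matrix (Fin n) (Fin n) ℝ) with hU
  have hUU : U * star U = 1 := (Matrix.mem_unitaryGroup_iff).mp hA.eigenvectorUnitary.2
  set u : Fin n → ℝ := (star U) *ᵥ w with hu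
  have hvm : w ᵥ* U = u := by
    rw [hu, Matrix.star_eq_conjTranspose, Matrix.conjTranspose_eq_transpose_of_trivial,
      Matrix.mulVec_transpose]
  have hAw : A *ᵥ w = U *ᵥ ((Matrix.diagonal (RCLike.ofReal ∘ hA.eigenvalues)) *ᵥ u) := by
    conv_lhs => rw [hA.spectral_theorem]
    rw [hu, Matrix.mulVec_mulVec, Matrix.mulVec_mulVec, Unitary.conjStarAlgAut_apply, ← hU]
  have hUu : U *ᵥ u = w := by
    rw [hu, Matrix.mulVec_mulVec, hUU, Matrix.one_mulVec]
  have h1 : w ⬝ᵥ (A *ᵥ w) = ∑ j, hA.eigenvalues j * (u j * u j) := by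
    rw [hAw, Matrix.dotProduct_mulVec w U, hvm]
    simp [dotProduct, Matrix.mulVec_diagonal, Function.comp]
    apply Finset.sum_congr rfl; intro j _; ring
  have h2 : u ⬝ᵥ u = w ⬝ᵥ w := by
    calc u ⬝ᵥ u = (w ᵥ* U) ⬝ᵥ u := by rw [hvm]
    _ = w ⬝ᵥ (U *ᵥ u) := (Matrix.dotProduct_mulVec w U u).symm
    _ = w ⬝ᵥ w := by rw [hUu]
  rw [h1, ← h2]
  have : ∑ j, hA.eigenvalues j * (u j * u j) ≤ ∑ j, c * (u j * u j) := by
    apply Finset.sum_le_sum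
    intro j _
    exact mul_le_mul_of_nonneg_right (hc j) (mul_self_nonneg _)
  refine this.trans ?_
  rw [dotProduct, Finset.mul_sum]


lemma eig_nonneg {m' : Type*} [Fintype m'] {n : ℕ} (A : Matrix m' (Fin n) ℝ) (j : Fin n) :
    0 ≤ (show (Aᵀ * A).IsHermitian from Matrix.isHermitian_conjTranspose_mul_self A).eigenvalues j := by
  classical
  have h : (Aᵀ * A).PosSemidef := by
    have := Matrix.posSemidef_conjTranspose_mul_self A
    rwa [Matrix.conjTranspose_eq_transpose_of_trivial] at this
  exact h.eigenvalues_nonneg j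

lemma eig_le_sigmaMax_sq {m' : Type*} [Fintype m'] {n : ℕ} (A : Matrix m' (Fin n) ℝ) (j : Fin n) :
    (show (Aᵀ * A).IsHermitian from Matrix.isHermitian_conjTranspose_mul_self A).eigenvalues j ≤ sigmaMax A ^ 2 := by
  haveI : Nonempty (Fin n) := ⟨j⟩
  have hb : BddAbove (Set.range (singVals A)) := Set.Finite.bddAbove (Set.finite_range _)
  have h1 : singVals A j ≤ sigmaMax A := le_ciSup hb j
  have h0 : 0 ≤ singVals A j := Real.sqrt_nonneg _
  have h2 : (show (Aᵀ * A).IsHermitian from Matrix.isHermitian_conjTranspose_mul_self A).eigenvalues j = singVals A j ^ 2 :=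
    (Real.sq_sqrt (eig_nonneg A j)).symm
  rw [h2, sq, sq]
  exact mul_le_mul h1 h1 h0 (h0.trans h1)

lemma mulVec_sq_le {m' : Type*} [Fintype m'] {n : ℕ} (A : Matrix m' (Fin n) ℝ) (w : Fin n → ℝ) :
    (A *ᵥ w) ⬝ᵥ (A *ᵥ w) ≤ sigmaMax A ^ 2 * (w ⬝ᵥ w) := by
  have key : (A *ᵥ w) ⬝ᵥ (A *ᵥ w) = w ⬝ᵥ ((Aᵀ * A) *ᵥ w) := by
    rw [← Matrix.mulVec_mulVec, Matrix.dotProduct_mulVec w Aᵀ, Matrix.vecMul_transpose]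
  rw [key]
  exact rayleigh_bound _ (show (Aᵀ * A).IsHermitian from Matrix.isHermitian_conjTranspose_mul_self A) _ (eig_le_sigmaMax_sq A) w

lemma transpose_mulVec_sq_le {m' : Type*} [Fintype m'] {n : ℕ} (A : Matrix m' (Fin n) ℝ)
    (v : m' → ℝ) :
    (Aᵀ *ᵥ v) ⬝ᵥ (Aᵀ *ᵥ v) ≤ sigmaMax A ^ 2 * (v ⬝ᵥ v) := by
  set w : Fin n → ℝ := Aᵀ *ᵥ v with hw
  set W : ℝ := w ⬝ᵥ w with hW
  have hW0 : 0 ≤ W := Finset.sum_nonneg fun j _ => mul_self_nonneg _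
  have hv0 : 0 ≤ v ⬝ᵥ v := Finset.sum_nonneg fun j _ => mul_self_nonneg _
  have hWv : W = (A *ᵥ w) ⬝ᵥ v := by
    rw [hW]
    nth_rewrite 2 [hw]
    rw [Matrix.dotProduct_mulVec w Aᵀ, Matrix.vecMul_transpose, dotProduct_comm]
  have hCS : W ^ 2 ≤ ((A *ᵥ w) ⬝ᵥ (A *ᵥ w)) * (v ⬝ᵥ v) := by
    rw [hWv]
    simpa [dotProduct, sq] using
      Finset.sum_mul_sq_le_sq_mul_sq Finset.univ (A *ᵥ w) v
  have hbound := mulVec_sq_le A w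
  rcases eq_or_lt_of_le hW0 with h0 | h0
  · rw [← h0]
    positivity
  · have : W ^ 2 ≤ sigmaMax A ^ 2 * W * (v ⬝ᵥ v) := by
      calc W ^ 2 ≤ ((A *ᵥ w) ⬝ᵥ (A *ᵥ w)) * (v ⬝ᵥ v) := hCS
      _ ≤ sigmaMax A ^ 2 * W * (v ⬝ᵥ v) := by
          apply mul_le_mul_of_nonneg_right _ hv0
          exact hbound
    have := le_of_mul_le_mul_right (by nlinarith : W * W ≤ (sigmaMax A ^ 2 * (v ⬝ᵥ v)) * W) h0
    exact this

lemma sigmaMax_sq_pos {m' : Type*} [Fintype m'] {n : ℕ} (A : Matrix m' (Fin n) ℝ) (hA : A ≠ 0) :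
    0 < sigmaMax A ^ 2 := by
  by_contra h
  push_neg at h
  apply hA
  ext i j
  have hw := mulVec_sq_le A (Pi.single j 1)
  have hws : (A *ᵥ Pi.single j 1) = fun i => A i j := by
    funext i'
    simp [Matrix.mulVec_single]
  have hww : (A *ᵥ Pi.single j 1) ⬝ᵥ (A *ᵥ Pi.single j 1) = ∑ i', A i' j * A i' j := by
    rw [hws]; rfl
  have hsum : ∑ i', A i' j * A i' j ≤ 0 := by
    rw [← hww]
    refine hw.trans ?_
    have : (Pi.single j 1 : Fin n → ℝ) ⬝ᵥ Pi.single j 1 = 1 := by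
      simp [dotProduct, Pi.single_apply, Finset.sum_ite_eq]
    rw [this, mul_one]
    exact h
  have hz : ∀ i' ∈ Finset.univ, A i' j * A i' j = 0 := by
    rw [← Finset.sum_eq_zero_iff_of_nonneg (fun i' _ => mul_self_nonneg (A i' j))]
    exact le_antisymm hsum (Finset.sum_nonneg fun i' _ => mul_self_nonneg _)
  have := hz i (Finset.mem_univ i)
  simpa [mul_self_eq_zero] using this


/-- Lemma 3: one step of the averaging block nonlinear Kaczmarz method
with constant stepsize `α ∈ (0, 2(1−η))` and weights
`ω⁽ⁱ⁾ = ‖∇F_i(x_k)‖₂²/Σ_{j∈I}‖∇F_j(x_k)‖₂²`, i.e.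
`x_{k+1} = x_k − α (F'_I(x_k))ᵀ F_I(x_k)/‖F'_I(x_k)‖₂²`, satisfies
`‖x_{k+1} − x⋆‖₂² ≤ ‖x_k − x⋆‖₂² − (2(1−η)α − α²) ‖F_I(x_k)‖₂²/‖F'_I(x_k)‖₂²`. -/
theorem abnk_constant_stepsize_step
    {n m : ℕ}
    (F : Fin m → EuclideanSpace ℝ (Fin n) → ℝ)
    (grad : Fin m → EuclideanSpace ℝ (Fin n) → EuclideanSpace ℝ (Fin n))
    (η : ℝ) (hη0 : 0 ≤ η) (hη : η < 1 / 2)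
    -- F is differentiable with Jacobian whose i-th row is ∇F_i
    (hdiff : ∀ i x, HasGradientAt (F i) (grad i x) x)
    -- local tangential cone condition with constant η
    (hltcc : ∀ i (x₁ x₂ : EuclideanSpace ℝ (Fin n)),
      |F i x₁ - F i x₂ - ∑ j, grad i x₁ j * (x₁ j - x₂ j)| ≤ η * |F i x₁ - F i x₂|)
    (xstar : EuclideanSpace ℝ (Fin n)) (hstar : ∀ i, F i xstar = 0)
    (S : Finset (Fin m)) (hS : S.Nonempty)
    (xk : EuclideanSpace ℝ (Fin n))
    -- the row-submatrix F'_I(x_k) of the Jacobian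
    (J : Matrix {i // i ∈ S} (Fin n) ℝ)
    (hJdef : J = Matrix.of fun (i : {i // i ∈ S}) (j : Fin n) => grad i.1 xk j)
    (hJ : J ≠ 0)
    (α : ℝ) (hα0 : 0 < α) (hα2 : α < 2 * (1 - η))
    (xk1 : EuclideanSpace ℝ (Fin n))
    -- x_{k+1} = x_k − α (F'_I(x_k))ᵀ F_I(x_k) / ‖F'_I(x_k)‖₂²
    (hupd : xk1 = xk - (α / sigmaMax J ^ 2) • ∑ i ∈ S, F i xk • grad i xk) :
    ‖xk1 - xstar‖ ^ 2
      ≤ ‖xk - xstar‖ ^ 2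
        - (2 * (1 - η) * α - α ^ 2) * (∑ i ∈ S, (F i xk) ^ 2) / sigmaMax J ^ 2 := by
  classical
  set σ2 := sigmaMax J ^ 2 with hσ2
  have hσ2pos : 0 < σ2 := sigmaMax_sq_pos J hJ
  set y : EuclideanSpace ℝ (Fin n) := xk - xstar with hy
  set g : EuclideanSpace ℝ (Fin n) := ∑ i ∈ S, F i xk • grad i xk with hg
  set Q := ∑ i ∈ S, (F i xk) ^ 2 with hQ
  have hQ0 : 0 ≤ Q := Finset.sum_nonneg fun i _ => sq_nonneg _
  set t := α / σ2 with ht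
  have ht0 : 0 ≤ t := div_nonneg hα0.le hσ2pos.le
  -- inner product of y with each gradient
  have hip : ∀ i : Fin m, ⟪y, grad i xk⟫ = ∑ j, grad i xk j * (xk j - xstar j) := by
    intro i
    rw [PiLp.inner_apply]
    apply Finset.sum_congr rfl
    intro j _
    rw [hy]
    simp [PiLp.sub_apply]
  have hterm : ∀ i ∈ S, (1 - η) * (F i xk) ^ 2 ≤
      F i xk * (∑ j, grad i xk j * (xk j - xstar j)) := by
    intro i _
    have h := hltcc i xk xstar
    rw [hstar i, sub_zero] at h
    set a := F i xk with ha
    set b := ∑ j, grad i xk j * (xk j - xstar j) with hb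
    nlinarith [le_abs_self (a * (a - b)), abs_mul a (a - b),
      mul_le_mul_of_nonneg_left h (abs_nonneg a), sq_abs a, abs_nonneg a,
      sq_abs (a - b)]
  have hinner : (1 - η) * Q ≤ ⟪y, g⟫ := by
    rw [hg, inner_sum]
    simp_rw [real_inner_smul_right]
    rw [hQ, Finset.mul_sum]
    apply Finset.sum_le_sum
    intro i hi
    rw [hip i]
    exact hterm i hi
  -- norm of g
  set v : {i // i ∈ S} → ℝ := fun i => F i.1 xk with hv
  set w : Fin n → ℝ := Jᵀ *ᵥ v with hw
  have hgw : ∀ j, g j = w j := by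
    intro j
    have h1 : g j = ∑ i ∈ S, F i xk * grad i xk j := by
      rw [hg]
      rw [show ((∑ i ∈ S, F i xk • grad i xk : EuclideanSpace ℝ (Fin n)) j)
          = ∑ i ∈ S, (F i xk • grad i xk : EuclideanSpace ℝ (Fin n)) j from
        by rw [WithLp.ofLp_sum, Finset.sum_apply]]
      apply Finset.sum_congr rfl
      intro i _
      simp [PiLp.smul_apply]
    have h2 : w j = ∑ i ∈ S, grad i xk j * F i xk := by
      rw [hw, Matrix.mulVec, hJdef]
      rw [show (Matrix.of fun (i : {i // i ∈ S}) (j : Fin n) => grad i.1 xk j)ᵀ j ⬝ᵥ v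
          = ∑ i : {i // i ∈ S}, grad i.1 xk j * F i.1 xk from rfl]
      exact Finset.sum_coe_sort S (fun i => grad i xk j * F i xk)
    rw [h1, h2]
    apply Finset.sum_congr rfl
    intro i _
    ring
  have hgnorm : ‖g‖ ^ 2 = w ⬝ᵥ w := by
    rw [EuclideanSpace.norm_eq, Real.sq_sqrt (Finset.sum_nonneg fun j _ => sq_nonneg _)]
    rw [dotProduct]
    apply Finset.sum_congr rfl
    intro j _
    rw [← hgw j, Real.norm_eq_abs, sq_abs, sq]
  have hQv : Q = v ⬝ᵥ v := by
    rw [hQ, dotProduct]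
    rw [show ∑ i : {i // i ∈ S}, v i * v i = ∑ i : {i // i ∈ S}, F i.1 xk ^ 2 from
      Finset.sum_congr rfl fun i _ => (sq (F i.1 xk)).symm ▸ (sq (F i.1 xk))]
    exact (Finset.sum_coe_sort S (fun i => F i xk ^ 2)).symm
  have hgle : ‖g‖ ^ 2 ≤ σ2 * Q := by
    rw [hgnorm, hQv, hσ2, hw]
    exact transpose_mulVec_sq_le J v
  -- expansion
  have hx1 : xk1 - xstar = y - t • g := by
    rw [hupd, hy, sub_right_comm]
  have hexp : ‖xk1 - xstar‖ ^ 2 = ‖y‖ ^ 2 - 2 * (t * ⟪y, g⟫) + t ^ 2 * ‖g‖ ^ 2 := by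
    rw [hx1, norm_sub_sq_real, real_inner_smul_right, norm_smul, mul_pow,
      Real.norm_eq_abs, sq_abs]
  rw [hexp]
  have h1 : 2 * (t * ((1 - η) * Q)) ≤ 2 * (t * ⟪y, g⟫) := by
    apply mul_le_mul_of_nonneg_left _ (by norm_num : (0:ℝ) ≤ 2)
    exact mul_le_mul_of_nonneg_left hinner ht0
  have h2 : t ^ 2 * ‖g‖ ^ 2 ≤ t ^ 2 * (σ2 * Q) :=
    mul_le_mul_of_nonneg_left hgle (sq_nonneg t)
  have heq : ‖y‖ ^ 2 - 2 * (t * ((1 - η) * Q)) + t ^ 2 * (σ2 * Q)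
      = ‖y‖ ^ 2 - (2 * (1 - η) * α - α ^ 2) * Q / σ2 := by
    rw [ht]
    field_simp
    ring
  linarith
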